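/- arXiv:1707.09854 — 2 statements merged into one kernel-verified Lean document; each statement's English description precedes it below -/
import Mathlib

section
/- Let R_n = ℤ[x₁^{±1},…,x_n^{±1}] and σ_i = x_i − 1. If I_n + A ∈ GL_n(R_n) satisfies (I_n + A)·σ⃗ = σ⃗ (equivalently A·σ⃗ = 0⃗), then det(I_n + A) = ∏_{r=1}^n x_r^{s_r} for some integers s_r; in particular, the determinant is a product of powers of the variables with coefficient +1 (the sign −1 is impossible). -/
/-- The Laurent polynomial ring `R_n = ℤ[x₁^{±1},…,x_n^{±1}] = ℤ[ℤⁿ]`. -/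
abbrev Rn (n : ℕ) := AddMonoidAlgebra ℤ (Fin n →₀ ℤ)

/-- `σ_i = x_i - 1`. -/
noncomputable def sg {n : ℕ} (i : Fin n) : Rn n :=
  AddMonoidAlgebra.single (Finsupp.single i 1) 1 - 1



open AddMonoidAlgebra Finsupp

lemma unit_trivial {n : ℕ} {u : Rn n} (h : IsUnit u) :
    ∃ (g : Fin n →₀ ℤ) (c : ℤ), (c = 1 ∨ c = -1) ∧ u = AddMonoidAlgebra.single g c := by
  obtain ⟨⟨u, v, huv, hvu⟩, rfl⟩ := h
  dsimp only
  have hu0 : u ≠ 0 := by rintro rfl; simp at huv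
  have hv0 : v ≠ 0 := by rintro rfl; simp at huv
  have hus : u.coeff.support.Nonempty := Finsupp.support_nonempty_iff.mpr (mt AddMonoidAlgebra.coeff_eq_zero.mp hu0)
  have hvs : v.coeff.support.Nonempty := Finsupp.support_nonempty_iff.mpr (mt AddMonoidAlgebra.coeff_eq_zero.mp hv0)
  obtain ⟨aM, haM, haMle⟩ := Finset.exists_max_image u.coeff.support
    (toLex : (Fin n →₀ ℤ) → Lex (Fin n →₀ ℤ)) hus
  obtain ⟨am, ham, hamle⟩ := Finset.exists_min_image u.coeff.support
    (toLex : (Fin n →₀ ℤ) → Lex (Fin n →₀ ℤ)) hus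
  obtain ⟨bM, hbM, hbMle⟩ := Finset.exists_max_image v.coeff.support
    (toLex : (Fin n →₀ ℤ) → Lex (Fin n →₀ ℤ)) hvs
  obtain ⟨bm, hbm, hbmle⟩ := Finset.exists_min_image v.coeff.support
    (toLex : (Fin n →₀ ℤ) → Lex (Fin n →₀ ℤ)) hvs
  -- unique add at max and min
  have hUM : UniqueAdd u.coeff.support v.coeff.support aM bM := by
    intro a b ha hb hab
    by_contra hne
    have h1 : toLex a ≤ toLex aM := haMle a ha
    have h2 : toLex b ≤ toLex bM := hbMle b hb
    have hlt : toLex a + toLex b < toLex aM + toLex bM := by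
      rcases eq_or_lt_of_le h1 with he | hl
      · rcases eq_or_lt_of_le h2 with he2 | hl2
        · exact absurd ⟨toLex.injective he, toLex.injective he2⟩ hne
        · exact he ▸ add_lt_add_of_le_of_lt (le_refl _) hl2
      · exact add_lt_add_of_lt_of_le hl h2
    have : toLex (a + b) = toLex (aM + bM) := by rw [hab]
    rw [toLex_add, toLex_add] at this
    exact absurd this hlt.ne
  have hUm : UniqueAdd u.coeff.support v.coeff.support am bm := by
    intro a b ha hb hab
    by_contra hne
    have h1 : toLex am ≤ toLex a := hamle a ha
    have h2 : toLex bm ≤ toLex b := hbmle b hb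
    have hlt : toLex am + toLex bm < toLex a + toLex b := by
      rcases eq_or_lt_of_le h1 with he | hl
      · rcases eq_or_lt_of_le h2 with he2 | hl2
        · exact absurd ⟨(toLex.injective he).symm, (toLex.injective he2).symm⟩ hne
        · exact he ▸ add_lt_add_of_le_of_lt (le_refl _) hl2
      · exact add_lt_add_of_lt_of_le hl h2
    have : toLex (a + b) = toLex (am + bm) := by rw [hab]
    rw [toLex_add, toLex_add] at this
    exact absurd this.symm hlt.ne
  have hMcoeff : (u * v).coeff (aM + bM) = u.coeff aM * v.coeff bM :=
    AddMonoidAlgebra.coeff_mul_add_of_uniqueAdd hUM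
  have hmcoeff : (u * v).coeff (am + bm) = u.coeff am * v.coeff bm :=
    AddMonoidAlgebra.coeff_mul_add_of_uniqueAdd hUm
  have hM0 : aM + bM = 0 := by
    by_contra hne
    have : (u * v).coeff (aM + bM) = 0 := by
      rw [huv, AddMonoidAlgebra.one_def, AddMonoidAlgebra.coeff_single, Finsupp.single_apply, if_neg (Ne.symm hne)]
    rw [hMcoeff] at this
    exact (mul_ne_zero (Finsupp.mem_support_iff.mp haM) (Finsupp.mem_support_iff.mp hbM)) this
  have hm0 : am + bm = 0 := by
    by_contra hne
    have : (u * v).coeff (am + bm) = 0 := by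
      rw [huv, AddMonoidAlgebra.one_def, AddMonoidAlgebra.coeff_single, Finsupp.single_apply, if_neg (Ne.symm hne)]
    rw [hmcoeff] at this
    exact (mul_ne_zero (Finsupp.mem_support_iff.mp ham) (Finsupp.mem_support_iff.mp hbm)) this
  -- so am = aM
  have haeq : toLex am = toLex aM := by
    by_contra hne
    have hl : toLex am < toLex aM := lt_of_le_of_ne (hamle aM haM) hne
    have hlt : toLex am + toLex bm < toLex aM + toLex bM :=
      add_lt_add_of_lt_of_le hl (hbmle bM hbM)
    rw [← toLex_add, ← toLex_add, hm0, hM0] at hlt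
    exact lt_irrefl _ hlt
  have hsub : u.coeff.support ⊆ {aM} := by
    intro a ha
    have h1 : toLex a ≤ toLex aM := haMle a ha
    have h2 : toLex aM ≤ toLex a := haeq ▸ hamle a ha
    simpa using toLex.injective (le_antisymm h1 h2)
  have hu : u = AddMonoidAlgebra.single aM (u.coeff aM) :=
    AddMonoidAlgebra.coeff_injective (Finsupp.support_subset_singleton.mp hsub)
  refine ⟨aM, u.coeff aM, ?_, hu⟩
  have h1 : (u * v).coeff 0 = 1 := by rw [huv, AddMonoidAlgebra.one_def, AddMonoidAlgebra.coeff_single, Finsupp.single_apply, if_pos rfl]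
  rw [← hM0, hMcoeff] at h1
  exact Int.isUnit_iff.mp (IsUnit.of_mul_eq_one _ h1)


/-- augmentation -/
noncomputable def eps (n : ℕ) : Rn n →ₐ[ℤ] ℤ :=
  AddMonoidAlgebra.lift ℤ ℤ (Fin n →₀ ℤ) 1

@[simp] lemma eps_single (n : ℕ) (g : Fin n →₀ ℤ) (c : ℤ) :
    eps n (AddMonoidAlgebra.single g c) = c := by
  simp [eps, AddMonoidAlgebra.lift_single]

/-- evaluation x_i ↦ 1 for i ≠ j, x_j ↦ x -/
noncomputable def psi (n : ℕ) (j : Fin n) : Rn n →ₐ[ℤ] AddMonoidAlgebra ℤ ℤ :=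
  AddMonoidAlgebra.lift ℤ (AddMonoidAlgebra ℤ ℤ) (Fin n →₀ ℤ)
    { toFun := fun g => AddMonoidAlgebra.single ((Multiplicative.toAdd g) j) 1
      map_one' := by
        show AddMonoidAlgebra.single _ 1 = 1
        rw [AddMonoidAlgebra.one_def]
        congr 1
      map_mul' := fun a b => by
        rw [AddMonoidAlgebra.single_mul_single, mul_one]
        rfl }

@[simp] lemma psi_single (n : ℕ) (j : Fin n) (g : Fin n →₀ ℤ) (c : ℤ) :
    psi n j (AddMonoidAlgebra.single g c) = AddMonoidAlgebra.single (g j) c := by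
  rw [psi, AddMonoidAlgebra.lift_single]
  show c • AddMonoidAlgebra.single (g j) (1 : ℤ) = _
  rw [AddMonoidAlgebra.smul_single', mul_one]

lemma psi_sg (n : ℕ) (j i : Fin n) :
    psi n j (sg i) = if i = j then AddMonoidAlgebra.single (1 : ℤ) 1 - 1 else 0 := by
  rw [sg, map_sub, map_one, psi_single, Finsupp.single_apply]
  split_ifs with h
  · rfl
  · rw [sub_eq_zero]
    exact AddMonoidAlgebra.one_def.symm

lemma eps_eq (n : ℕ) (j : Fin n) (a : Rn n) :
    eps n a = AddMonoidAlgebra.lift ℤ ℤ ℤ 1 (psi n j a) := by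
  induction a using AddMonoidAlgebra.induction_on with
  | of g =>
    rw [AddMonoidAlgebra.of_apply, eps_single, psi_single, AddMonoidAlgebra.lift_single]
    simp
  | add f g hf hg => simp [map_add, hf, hg]
  | smul r f hf => simp [map_smul, hf]

lemma eps_zero_of_rel {n : ℕ} (a : Fin n → Rn n) (h : ∑ i : Fin n, a i * sg i = 0)
    (j : Fin n) : eps n (a j) = 0 := by
  have h1 : psi n j (∑ i : Fin n, a i * sg i) = 0 := by rw [h, map_zero]
  rw [map_sum] at h1
  simp_rw [map_mul, psi_sg] at h1
  rw [Finset.sum_eq_single j (fun i _ hi => by rw [if_neg hi, mul_zero])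
    (fun h => absurd (Finset.mem_univ j) h)] at h1
  rw [if_pos rfl] at h1
  have hX : (AddMonoidAlgebra.single (1 : ℤ) 1 - 1 : AddMonoidAlgebra ℤ ℤ) ≠ 0 := by
    intro hc
    have hc2 : (AddMonoidAlgebra.single (1 : ℤ) (1 : ℤ)) = AddMonoidAlgebra.single (0 : ℤ) 1 :=
      (sub_eq_zero.mp hc).trans AddMonoidAlgebra.one_def
    have := AddMonoidAlgebra.single_inj.mp hc2
    simp at this
  rcases mul_eq_zero.mp h1 with h2 | h2
  · rw [eps_eq n j, h2, map_zero]
  · exact absurd h2 hX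

/-- If `I_n + A ∈ GL_n(R_n)` satisfies `A·σ⃗ = 0⃗`, then `det(I_n + A)` is a Laurent
monomial with coefficient `+1`, i.e. `det(I_n + A) = ∏_r x_r^{s_r}` for some integers
`s_r` (the sign `-1` is impossible). -/
theorem det_of_IA_is_monomial (n : ℕ) (A : Matrix (Fin n) (Fin n) (Rn n))
    (hU : IsUnit ((1 : Matrix (Fin n) (Fin n) (Rn n)) + A))
    (hA : ∀ k : Fin n, ∑ i : Fin n, A k i * sg i = 0) :
    ∃ s : Fin n → ℤ,
      ((1 : Matrix (Fin n) (Fin n) (Rn n)) + A).det =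
        AddMonoidAlgebra.single (∑ r : Fin n, Finsupp.single r (s r)) 1 := by
  have hdet : IsUnit ((1 + A).det) := (Matrix.isUnit_iff_isUnit_det _).mp hU
  obtain ⟨g, c, hc, hdeq⟩ := unit_trivial hdet
  have hAz : ∀ k i : Fin n, eps n (A k i) = 0 := fun k i => eps_zero_of_rel (A k) (hA k) i
  have hmap : ((1 + A).map (eps n)) = 1 := by
    ext k i
    simp only [Matrix.map_apply, Matrix.add_apply, map_add]
    rw [hAz k i, add_zero]
    by_cases h : k = i
    · subst h; simp
    · simp [Matrix.one_apply_ne h]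
  have hed : eps n ((1 + A).det) = 1 := by
    rw [show (eps n : Rn n → ℤ) ((1+A).det) = (eps n).toRingHom ((1+A).det) from rfl,
      RingHom.map_det]
    rw [RingHom.mapMatrix_apply]
    rw [show ((1 + A).map ((eps n).toRingHom : Rn n → ℤ)) = ((1 + A).map (eps n)) from rfl, hmap,
      Matrix.det_one]
  rw [hdeq, eps_single] at hed
  subst hed
  exact ⟨fun r => g r, by rw [hdeq]; congr 1; exact (Finsupp.univ_sum_single g).symm⟩
end

section
/- Let R_n = ℤ[x₁^{±1},…,x_n^{±1}], σ_i = x_i − 1, and fix 1 ≤ i ≤ n. The group IGL_{n−1,i} of matrices I_n + A ∈ GL_n(R_n) with A·σ⃗ = 0⃗ whose i-th row of A is zero and whose (i,i)-minor I_{n−1} + A_{i,i} lies in GL_{n−1}(R_n, σ_i R_n) is isomorphic to GL_{n−1}(R_n, σ_i R_n) via I_n + A ↦ I_{n−1} + A_{i,i}. -/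
/-- The subgroup `IGL_{n-1,i}` of the Magnus-embedded `IA(Φ_n)`: invertible matrices `M`
with `M·σ⃗ = σ⃗`, whose `i`-th row is the `i`-th row of the identity, and whose
`(i,i)`-minor lies in `GL_{n-1}(R_n, σ_i R_n)`. -/
def IGLset (n : ℕ) (i : Fin (n + 1)) : Set (Matrix (Fin (n + 1)) (Fin (n + 1)) (Rn (n + 1))) :=
  {M | IsUnit M ∧ (∀ k, ∑ l, M k l * sg l = sg k) ∧
    (∀ l, M i l = (1 : Matrix (Fin (n + 1)) (Fin (n + 1)) (Rn (n + 1))) i l) ∧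
    IsUnit (M.submatrix i.succAbove i.succAbove) ∧
    ∀ p q, M.submatrix i.succAbove i.succAbove p q -
      (1 : Matrix (Fin n) (Fin n) (Rn (n + 1))) p q ∈ Ideal.span {sg i}}

/-- The congruence subgroup `GL_{n-1}(R_n, σ_i R_n)`, as a set of `(n-1)×(n-1)` matrices. -/
def GLcset (n : ℕ) (i : Fin (n + 1)) : Set (Matrix (Fin n) (Fin n) (Rn (n + 1))) :=
  {B | IsUnit B ∧ ∀ p q, B p q - (1 : Matrix (Fin n) (Fin n) (Rn (n + 1))) p q ∈ Ideal.span {sg i}}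

lemma sg_ne_zero {n : ℕ} (i : Fin n) : sg i ≠ 0 := by
  intro h
  have h2 : (sg i).coeff (Finsupp.single i 1) = 0 := by rw [h]; rfl
  rw [sg, AddMonoidAlgebra.coeff_sub, AddMonoidAlgebra.one_def, AddMonoidAlgebra.coeff_single,
    AddMonoidAlgebra.coeff_single, Finsupp.sub_apply,
    Finsupp.single_eq_same, Finsupp.single_apply] at h2
  have : (0 : Fin n →₀ ℤ) ≠ Finsupp.single i 1 := by
    symm; simp [Finsupp.single_eq_zero]
  rw [if_neg this] at h2
  simp at h2

/-- Sum against a row of the identity matrix. -/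
lemma one_row_sum {R : Type*} [CommRing R] {m : Type*} [Fintype m] [DecidableEq m]
    (p : m) (f : m → R) : ∑ q, (1 : Matrix m m R) p q * f q = f p := by
  simp [Matrix.one_apply]

/-- Determinant of a matrix whose `i`-th row is the `i`-th row of the identity. -/
lemma det_eq_det_minor {R : Type*} [CommRing R] {n : ℕ}
    (M : Matrix (Fin (n + 1)) (Fin (n + 1)) R) (i : Fin (n + 1))
    (h : ∀ l, M i l = (1 : Matrix (Fin (n + 1)) (Fin (n + 1)) R) i l) :
    M.det = (M.submatrix i.succAbove i.succAbove).det := by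
  rw [Matrix.det_succ_row M i, Finset.sum_eq_single i]
  · rw [h i, Matrix.one_apply_eq]
    have h2 : ((-1 : R)) ^ ((i : ℕ) + (i : ℕ)) = 1 := Even.neg_one_pow ⟨i, rfl⟩
    rw [h2]; ring
  · intro j _ hj
    rw [h j, Matrix.one_apply_ne (Ne.symm hj), mul_zero, zero_mul]
  · intro hi; exact absurd (Finset.mem_univ i) hi

/-- Congruence condition as an equation in the quotient ring. -/
lemma cong_iff {R : Type*} [CommRing R] {m : Type*} [Fintype m] [DecidableEq m]
    (I : Ideal R) (B : Matrix m m R) :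
    (∀ p q, B p q - (1 : Matrix m m R) p q ∈ I) ↔
      B.map (Ideal.Quotient.mk I) = 1 := by
  have key : ∀ p q : m, (Ideal.Quotient.mk I) ((1 : Matrix m m R) p q)
      = (1 : Matrix m m (R ⧸ I)) p q := by
    intro p q
    by_cases hpq : p = q <;> simp [Matrix.one_apply, hpq]
  constructor
  · intro h
    ext p q
    rw [Matrix.map_apply, ← key p q, Ideal.Quotient.eq]
    exact h p q
  · intro h p q
    have h2 := Matrix.ext_iff.mpr h p q
    rw [Matrix.map_apply] at h2
    rw [← Ideal.Quotient.eq, key p q]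
    exact h2

/-- The submatrix of a product is the product of submatrices, when the second factor has
identity `i`-th row. -/
lemma submatrix_mul_aux {n : ℕ} (i : Fin (n + 1))
    (M N : Matrix (Fin (n + 1)) (Fin (n + 1)) (Rn (n + 1)))
    (hN : ∀ l, N i l = (1 : Matrix (Fin (n + 1)) (Fin (n + 1)) (Rn (n + 1))) i l) :
    (M * N).submatrix i.succAbove i.succAbove =
      M.submatrix i.succAbove i.succAbove * N.submatrix i.succAbove i.succAbove := by
  ext p q
  simp only [Matrix.submatrix_apply, Matrix.mul_apply]
  rw [Fin.sum_univ_succAbove (fun l => M (i.succAbove p) l * N l (i.succAbove q)) i]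
  have h0 : N i (i.succAbove q) = 0 := by
    rw [hN]; exact Matrix.one_apply_ne (Ne.symm (Fin.succAbove_ne i q))
  rw [h0, mul_zero, zero_add]

/-- `IGL_{n-1,i} ≅ GL_{n-1}(R_n, σ_i R_n)` via `I_n + A ↦ I_{n-1} + A_{i,i}` (deleting the
`i`-th row and column): the minor map is a multiplicative bijection, and `IGL_{n-1,i}` is
closed under multiplication. -/
theorem IGL_iso_GL_congruence (n : ℕ) (i : Fin (n + 1)) :
    (∀ M ∈ IGLset n i, ∀ N ∈ IGLset n i, M * N ∈ IGLset n i) ∧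
    Set.BijOn (fun M => M.submatrix i.succAbove i.succAbove) (IGLset n i) (GLcset n i) ∧
    (∀ M ∈ IGLset n i, ∀ N ∈ IGLset n i,
      (M * N).submatrix i.succAbove i.succAbove =
        M.submatrix i.succAbove i.succAbove * N.submatrix i.succAbove i.succAbove) := by
  set I : Ideal (Rn (n + 1)) := Ideal.span {sg i} with hI
  have hmul : ∀ M ∈ IGLset n i, ∀ N ∈ IGLset n i,
      (M * N).submatrix i.succAbove i.succAbove =
        M.submatrix i.succAbove i.succAbove * N.submatrix i.succAbove i.succAbove := by
    intro M _ N hN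
    exact submatrix_mul_aux i M N hN.2.2.1
  refine ⟨?_, ⟨?_, ?_, ?_⟩, hmul⟩
  · -- closure under multiplication
    rintro M ⟨hM1, hM2, hM3, hM4, hM5⟩ N ⟨hN1, hN2, hN3, hN4, hN5⟩
    refine ⟨hM1.mul hN1, ?_, ?_, ?_, ?_⟩
    · intro k
      simp only [Matrix.mul_apply, Finset.sum_mul]
      rw [Finset.sum_comm]
      calc ∑ m, ∑ l, M k m * N m l * sg l
          = ∑ m, M k m * ∑ l, N m l * sg l := by
            refine Finset.sum_congr rfl fun m _ => ?_
            rw [Finset.mul_sum]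
            exact Finset.sum_congr rfl fun l _ => (mul_assoc _ _ _)
        _ = ∑ m, M k m * sg m := by
            refine Finset.sum_congr rfl fun m _ => by rw [hN2 m]
        _ = sg k := hM2 k
    · intro l
      simp only [Matrix.mul_apply]
      calc ∑ m, M i m * N m l = ∑ m, (1 : Matrix _ _ (Rn (n+1))) i m * N m l := by
            refine Finset.sum_congr rfl fun m _ => by rw [hM3 m]
        _ = N i l := one_row_sum i (fun m => N m l)
        _ = _ := hN3 l
    · rw [submatrix_mul_aux i M N hN3]
      exact hM4.mul hN4
    · rw [submatrix_mul_aux i M N hN3]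
      refine (cong_iff I _).2 ?_
      rw [Matrix.map_mul, (cong_iff I _).1 hM5, (cong_iff I _).1 hN5, one_mul]
  · -- MapsTo
    rintro M ⟨_, _, _, hM4, hM5⟩
    exact ⟨hM4, hM5⟩
  · -- InjOn
    rintro M ⟨hM1, hM2, hM3, hM4, hM5⟩ N ⟨hN1, hN2, hN3, hN4, hN5⟩ hsub
    simp only at hsub
    have hent : ∀ p q, M (i.succAbove p) (i.succAbove q) = N (i.succAbove p) (i.succAbove q) :=
      fun p q => Matrix.ext_iff.mpr hsub p q
    refine Matrix.ext_iff.mp fun k l => ?_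
    rcases eq_or_ne i k with rfl | hk
    · rw [hM3 l, hN3 l]
    · obtain ⟨p, rfl⟩ := Fin.exists_succAbove_eq (Ne.symm hk)
      rcases eq_or_ne i l with rfl | hl
      · have h1 := hM2 (i.succAbove p)
        have h2 := hN2 (i.succAbove p)
        rw [Fin.sum_univ_succAbove (fun l => M (i.succAbove p) l * sg l) i] at h1
        rw [Fin.sum_univ_succAbove (fun l => N (i.succAbove p) l * sg l) i] at h2
        have htail : ∑ q, M (i.succAbove p) (i.succAbove q) * sg (i.succAbove q)
            = ∑ q, N (i.succAbove p) (i.succAbove q) * sg (i.succAbove q) :=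
          Finset.sum_congr rfl fun q _ => by rw [hent p q]
        rw [htail] at h1
        have := add_right_cancel (h1.trans h2.symm)
        exact mul_right_cancel₀ (sg_ne_zero i) this
      · obtain ⟨q, rfl⟩ := Fin.exists_succAbove_eq (Ne.symm hl)
        exact hent p q
  · -- SurjOn
    rintro B ⟨hB1, hB2⟩
    choose a ha using fun p q => Ideal.mem_span_singleton'.1 (hB2 p q)
    have hBq : ∀ p q, B p q = (1 : Matrix (Fin n) (Fin n) (Rn (n+1))) p q + a p q * sg i := by
      intro p q
      linear_combination -(ha p q)
    set M : Matrix (Fin (n + 1)) (Fin (n + 1)) (Rn (n + 1)) :=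
      Matrix.of (i.insertNth (fun l => (1 : Matrix (Fin (n+1)) (Fin (n+1)) (Rn (n+1))) i l)
        (fun p => i.insertNth (-(∑ q, a p q * sg (i.succAbove q))) (fun q => B p q))) with hMdef
    have hMi : ∀ l, M i l = (1 : Matrix (Fin (n+1)) (Fin (n+1)) (Rn (n+1))) i l := by
      intro l
      simp [hMdef, Fin.insertNth_apply_same]
    have hMpi : ∀ p, M (i.succAbove p) i = -(∑ q, a p q * sg (i.succAbove q)) := by
      intro p
      simp [hMdef, Fin.insertNth_apply_succAbove, Fin.insertNth_apply_same]
    have hMpq : ∀ p q, M (i.succAbove p) (i.succAbove q) = B p q := by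
      intro p q
      simp [hMdef, Fin.insertNth_apply_succAbove]
    have hsub : M.submatrix i.succAbove i.succAbove = B :=
      Matrix.ext_iff.mp fun p q => hMpq p q
    have hMunit : IsUnit M := by
      rw [Matrix.isUnit_iff_isUnit_det, det_eq_det_minor M i hMi, hsub]
      exact (Matrix.isUnit_iff_isUnit_det B).1 hB1
    refine ⟨M, ⟨hMunit, ?_, hMi, ?_, ?_⟩, hsub⟩
    · intro k
      rcases eq_or_ne i k with rfl | hk
      · calc ∑ l, M i l * sg l = ∑ l, (1 : Matrix _ _ (Rn (n+1))) i l * sg l :=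
              Finset.sum_congr rfl fun l _ => by rw [hMi l]
          _ = sg i := one_row_sum i sg
      · obtain ⟨p, rfl⟩ := Fin.exists_succAbove_eq (Ne.symm hk)
        rw [Fin.sum_univ_succAbove (fun l => M (i.succAbove p) l * sg l) i]
        rw [hMpi p]
        have : ∑ q, M (i.succAbove p) (i.succAbove q) * sg (i.succAbove q)
            = ∑ q, ((1 : Matrix (Fin n) (Fin n) (Rn (n+1))) p q * sg (i.succAbove q)
                + a p q * sg (i.succAbove q) * sg i) := by
          refine Finset.sum_congr rfl fun q _ => ?_
          rw [hMpq p q, hBq p q]; ring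
        rw [this, Finset.sum_add_distrib, ← Finset.sum_mul,
          one_row_sum p (fun q => sg (i.succAbove q))]
        ring
    · rw [hsub]; exact hB1
    · rw [hsub]; exact hB2
end
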